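/- Let μ be a probability measure on ℝ, G: ℝ → ℝ an odd increasing function, k ≥ 1 an integer, and suppose all relevant integrals are finite. Then ∫∫ sign(x)|x|^{2k-1} G(x - y) μ(dy) μ(dx) ≥ 0. -/

import Mathlib

open MeasureTheory

theorem odd_moment_convolution_nonneg
    (μ : Measure ℝ) [IsProbabilityMeasure μ]
    (G : ℝ → ℝ) (hodd : ∀ x, G (-x) = -G x) (hmono : Monotone G)
    (k : ℕ) (hk : 1 ≤ k)
    (hint : Integrable (fun p : ℝ × ℝ =>
      Real.sign p.1 * |p.1| ^ (2 * k - 1) * G (p.1 - p.2)) (μ.prod μ)) :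
    0 ≤ ∫ x, ∫ y, Real.sign x * |x| ^ (2 * k - 1) * G (x - y) ∂μ ∂μ := by
  set n := 2 * k - 1 with hn
  have hodd_n : Odd n := ⟨k - 1, by omega⟩
  have hG0 : G 0 = 0 := by have := hodd 0; simp at this; linarith
  have hsign : ∀ x : ℝ, Real.sign x * |x| ^ n = x ^ n := by
    intro x
    rcases lt_trichotomy x 0 with h | h | h
    · rw [Real.sign_of_neg h, abs_of_neg h, hodd_n.neg_pow]; ring
    · subst h; rw [Real.sign_zero, zero_pow (by omega), zero_mul]
    · rw [Real.sign_of_pos h, abs_of_pos h, one_mul]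
  have heq : (fun p : ℝ × ℝ => Real.sign p.1 * |p.1| ^ n * G (p.1 - p.2))
      = fun p : ℝ × ℝ => p.1 ^ n * G (p.1 - p.2) := by
    funext p; rw [hsign]
  rw [show (fun x => ∫ y, Real.sign x * |x| ^ n * G (x - y) ∂μ)
      = fun x => ∫ y, x ^ n * G (x - y) ∂μ by
    funext x; congr 1; funext y; rw [hsign]]
  have hint' : Integrable (fun p : ℝ × ℝ => p.1 ^ n * G (p.1 - p.2)) (μ.prod μ) := by
    rw [← heq]; exact hint
  rw [integral_integral hint']
  have hswapint : Integrable
      (fun p : ℝ × ℝ => p.2 ^ n * G (p.2 - p.1)) (μ.prod μ) := by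
    have := hint'.swap
    simpa [Function.comp_def] using this
  have hkey : ∀ p : ℝ × ℝ,
      0 ≤ p.1 ^ n * G (p.1 - p.2) + p.2 ^ n * G (p.2 - p.1) := by
    rintro ⟨x, y⟩
    have hG : G (y - x) = -G (x - y) := by rw [← hodd]; ring_nf
    simp only
    rw [hG]
    have : x ^ n * G (x - y) + y ^ n * -G (x - y)
        = (x ^ n - y ^ n) * G (x - y) := by ring
    rw [this]
    rcases le_total x y with h | h
    · have h1 : x ^ n ≤ y ^ n := (hodd_n.strictMono_pow (R := ℝ)).monotone h
      have h2 : G (x - y) ≤ 0 := by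
        have := hmono (show x - y ≤ 0 by linarith)
        rwa [hG0] at this
      nlinarith
    · have h1 : y ^ n ≤ x ^ n := (hodd_n.strictMono_pow (R := ℝ)).monotone h
      have h2 : 0 ≤ G (x - y) := by
        have := hmono (show 0 ≤ x - y by linarith)
        rwa [hG0] at this
      exact mul_nonneg (by linarith) h2
  have hsum : 0 ≤ ∫ p : ℝ × ℝ,
      (p.1 ^ n * G (p.1 - p.2) + p.2 ^ n * G (p.2 - p.1)) ∂(μ.prod μ) :=
    integral_nonneg hkey
  rw [integral_add hint' hswapint] at hsum
  have hswap : ∫ p : ℝ × ℝ, p.2 ^ n * G (p.2 - p.1) ∂(μ.prod μ)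
      = ∫ p : ℝ × ℝ, p.1 ^ n * G (p.1 - p.2) ∂(μ.prod μ) := by
    have := integral_prod_swap (ν := μ) (μ := μ)
      (fun p : ℝ × ℝ => p.1 ^ n * G (p.1 - p.2))
    simpa [Prod.swap] using this
  rw [hswap] at hsum
  linarith
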